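/- Let Y ∈ 𝒴(m,n) be an admissible numbered Young diagram (satisfying properties (i), (ii), (iii) below). Define S : {0,…,n} → {0,…,n} by S(0) = 0, S(y_{i,j}) = y_{i,j+1} for y_{i,j} > 0 and j < n, and S(y_{i,n}) = 0. Then S is well-defined, the restriction S⁺ of S to the set where S is positive is a strictly increasing bijection onto its range, and the value 1 occurs in the first column of Y. -/

import Mathlib

/-- For an admissible numbered Young diagram `Y`, the successor map `S` defined by
`S(0) = 0`, `S(y_{i,j}) = y_{i,j+1}` is well defined, its restriction to the set where it
is positive is strictly increasing (hence a bijection onto its range), and the value `1`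
occurs in the first column of `Y`. -/
theorem stmt8 (m n : ℕ) (hn : 0 < n)
    (Y : Fin m → ℕ → ℕ)
    (hYle : ∀ i j, Y i j ≤ n)
    (hYout : ∀ (i : Fin m) (j : ℕ), (j = 0 ∨ n < j) → Y i j = 0)
    -- each of `1, …, n` occurs exactly once
    (hYnum : ∀ v, 1 ≤ v → v ≤ n →
      ∃! p : Fin m × ℕ, 1 ≤ p.2 ∧ p.2 ≤ n ∧ Y p.1 p.2 = v)
    (pB : ℕ) (hpB : pB = (Finset.univ.filter (fun i : Fin m => Y i 1 ≠ 0)).card)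
    -- (i) rows are left-aligned
    (hi : ∀ (i : Fin m) (j : ℕ), 1 ≤ j → 0 < Y i (j + 1) → 0 < Y i j)
    -- (ii) the values `n - p_B + 1, …, n` occur as last nonzero entries of rows
    (hii : ∀ v, n - pB + 1 ≤ v → v ≤ n →
      ∃ (i : Fin m) (j : ℕ), 1 ≤ j ∧ j ≤ n ∧ Y i j = v ∧ ∀ j', j < j' → Y i j' = 0)
    -- (iii)
    (hiii : ∀ (i i' : Fin m) (j j' : ℕ), 1 ≤ j → 1 ≤ j' →
      Y i' (j' + 1) < Y i (j + 1) → 0 < Y i' (j' + 1) →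
      (0 < Y i' j' ∧ Y i' j' < Y i j)) :
    (∃ S : ℕ → ℕ, S 0 = 0 ∧
      (∀ (i : Fin m) (j : ℕ), 1 ≤ j → 0 < Y i j → S (Y i j) = Y i (j + 1)) ∧
      (∀ k k' : ℕ, 0 < S k → 0 < S k' → k < k' → S k < S k')) ∧
    (∃ i : Fin m, Y i 1 = 1) := by
  classical
  set S : ℕ → ℕ := fun v =>
    if hv : 1 ≤ v ∧ v ≤ n then
      Y (hYnum v hv.1 hv.2).choose.1 ((hYnum v hv.1 hv.2).choose.2 + 1)
    else 0 with hS
  have hS0 : S 0 = 0 := by simp [hS]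
  have hSeq : ∀ (i : Fin m) (j : ℕ), 1 ≤ j → 0 < Y i j → S (Y i j) = Y i (j + 1) := by
    intro i j hj hpos
    have hv1 : 1 ≤ Y i j := hpos
    have hv2 : Y i j ≤ n := hYle i j
    have hjn : j ≤ n := by
      by_contra h
      have := hYout i j (Or.inr (not_le.mp h))
      omega
    have hsp := (hYnum (Y i j) hv1 hv2).choose_spec
    have huniq := hsp.2 (i, j) ⟨hj, hjn, rfl⟩
    simp only [hS]
    rw [dif_pos ⟨hv1, hv2⟩, ← huniq]
  have hSpos : ∀ v, 0 < S v →
      ∃ (i : Fin m) (j : ℕ), 1 ≤ j ∧ j ≤ n ∧ Y i j = v ∧ S v = Y i (j + 1) := by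
    intro v hv
    by_cases h : 1 ≤ v ∧ v ≤ n
    · have hsp := (hYnum v h.1 h.2).choose_spec.1
      exact ⟨_, _, hsp.1, hsp.2.1, hsp.2.2, by simp only [hS]; rw [dif_pos h]⟩
    · exfalso
      simp only [hS] at hv
      rw [dif_neg h] at hv
      omega
  have hmono : ∀ k k' : ℕ, 0 < S k → 0 < S k' → k < k' → S k < S k' := by
    intro k k' hk hk' hlt
    obtain ⟨i, j, hj1, hjn, hij, hSk⟩ := hSpos k hk
    obtain ⟨i', j', hj1', hjn', hij', hSk'⟩ := hSpos k' hk'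
    rcases lt_trichotomy (S k) (S k') with h | h | h
    · exact h
    · exfalso
      have hp1 : 0 < Y i (j + 1) := by rw [← hSk]; exact hk
      have hn1 : j + 1 ≤ n := by
        by_contra hc
        have := hYout i (j + 1) (Or.inr (by omega))
        omega
      have hn2 : j' + 1 ≤ n := by
        by_contra hc
        have h2 := hYout i' (j' + 1) (Or.inr (by omega))
        rw [← hSk'] at h2
        omega
      obtain ⟨p, hp, huniq⟩ := hYnum (Y i (j + 1)) hp1 (hYle i (j + 1))
      have e1 := huniq (i, j + 1) ⟨by omega, hn1, rfl⟩
      have e2 := huniq (i', j' + 1) ⟨by omega, hn2, by rw [← hSk', ← h, hSk]⟩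
      have he : (i, j + 1) = ((i', j' + 1) : Fin m × ℕ) := by rw [e1, e2]
      have hieq : i = i' := congrArg Prod.fst he
      have hjeq : j = j' := by
        have := congrArg Prod.snd he
        simp at this
        omega
      subst hieq; subst hjeq
      omega
    · exfalso
      have := hiii i i' j j' hj1 hj1'
        (by rw [← hSk, ← hSk']; exact h) (by rw [← hSk']; exact hk')
      omega
  have hchain : ∀ (i : Fin m) (j j' : ℕ), 1 ≤ j → j ≤ j' → 0 < Y i j' → 0 < Y i j := by
    intro i j j' hj hle hpos
    induction j' with
    | zero => omega
    | succ k ih =>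
      rcases Nat.eq_or_lt_of_le hle with h | h
      · rwa [h]
      · exact ih (by omega) (hi i k (by omega) hpos)
  have hBn : pB ≤ n := by
    have hcard : (Finset.univ.filter (fun i : Fin m => Y i 1 ≠ 0)).card ≤
        (Finset.Icc 1 n).card := by
      apply Finset.card_le_card_of_injOn (fun i => Y i 1)
      · intro a ha
        simp only [Finset.mem_coe, Finset.mem_filter, Finset.mem_univ, true_and] at ha
        simp only [Finset.mem_coe, Finset.mem_Icc]
        exact ⟨by omega, hYle a 1⟩
      · intro a ha b hb hab
        simp only [Finset.coe_filter, Set.mem_setOf_eq] at ha hb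
        have h1 : 1 ≤ Y a 1 := by omega
        obtain ⟨p, hp, huniq⟩ := hYnum (Y a 1) h1 (hYle a 1)
        have e1 := huniq (a, 1) ⟨le_refl 1, hn, rfl⟩
        have e2 := huniq (b, 1) ⟨le_refl 1, hn, hab.symm⟩
        have he : (a, 1) = ((b, 1) : Fin m × ℕ) := by rw [e1, e2]
        exact congrArg Prod.fst he
    rw [Nat.card_Icc] at hcard
    omega
  refine ⟨⟨S, hS0, hSeq, hmono⟩, ?_⟩
  obtain ⟨⟨i, j⟩, hP, huniq⟩ := hYnum 1 le_rfl hn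
  have hj1 : 1 ≤ j := hP.1
  have hjn : j ≤ n := hP.2.1
  have hij : Y i j = 1 := hP.2.2
  by_cases hj : j = 1
  · exact ⟨i, hj ▸ hij⟩
  · exfalso
    have hj2 : 2 ≤ j := by omega
    have hw : 0 < Y i (j - 1) := by
      have := hi i (j - 1) (by omega) (by rw [show j - 1 + 1 = j by omega]; omega)
      exact this
    set w := Y i (j - 1) with hwdef
    have hSw : S w = 1 := by
      have h1 := hSeq i (j - 1) (by omega) hw
      rw [show j - 1 + 1 = j by omega] at h1
      rw [← hwdef] at h1
      rw [h1, hij]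
    have hwn : w ≤ n := hYle i (j - 1)
    have hw2 : 2 ≤ w := by
      rcases Nat.lt_or_ge w 2 with h | h
      · exfalso
        have hw1 : w = 1 := by omega
        have he := huniq (i, j - 1) ⟨by omega, by omega, by rw [← hwdef]; exact hw1⟩
        have := congrArg Prod.snd he
        simp at this
        omega
      · exact h
    have hwle : w ≤ n - pB := by
      by_contra hc
      push_neg at hc
      obtain ⟨a, b, hb1, hbn, hab, hlast⟩ := hii w (by omega) hwn
      obtain ⟨p, hp, huw⟩ := hYnum w (by omega) hwn
      have e1 := huw (a, b) ⟨hb1, hbn, hab⟩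
      have e2 := huw (i, j - 1) ⟨by omega, by omega, hwdef.symm⟩
      have he : (a, b) = ((i, j - 1) : Fin m × ℕ) := by rw [e1, e2]
      have ha : a = i := congrArg Prod.fst he
      have hb : b = j - 1 := by
        have := congrArg Prod.snd he
        simpa using this
      have h0 := hlast j (by omega)
      rw [ha] at h0
      omega
    have hiB : i ∈ Finset.univ.filter (fun i : Fin m => Y i 1 ≠ 0) := by
      simp only [Finset.mem_filter, Finset.mem_univ, true_and]
      have := hchain i 1 j le_rfl (by omega) (by omega)
      omega
    set T := Finset.Icc (n - pB + 1) n with hTdef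
    have hcardT : T.card = pB := by
      rw [hTdef, Nat.card_Icc]
      omega
    set f : ℕ → Fin m := fun v =>
      if h : ∃ a b, 1 ≤ b ∧ b ≤ n ∧ Y a b = v ∧ ∀ j', b < j' → Y a j' = 0 then h.choose
      else i with hfdef
    have hfspec : ∀ v ∈ T, ∃ b, 1 ≤ b ∧ b ≤ n ∧ Y (f v) b = v ∧
        ∀ j', b < j' → Y (f v) j' = 0 := by
      intro v hv
      rw [hTdef, Finset.mem_Icc] at hv
      have h := hii v hv.1 hv.2
      simp only [hfdef]
      rw [dif_pos h]
      exact h.choose_spec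
    have hinj : Set.InjOn f ↑T := by
      intro v hv v' hv' hvv
      rw [Finset.mem_coe] at hv hv'
      obtain ⟨b, hb1, hbn, hfb, hbl⟩ := hfspec v hv
      obtain ⟨b', hb1', hbn', hfb', hbl'⟩ := hfspec v' hv'
      have hv1 : 1 ≤ v := by rw [hTdef, Finset.mem_Icc] at hv; omega
      have hv1' : 1 ≤ v' := by rw [hTdef, Finset.mem_Icc] at hv'; omega
      rcases lt_trichotomy b b' with h | h | h
      · have h0 := hbl b' h
        rw [hvv] at h0
        omega
      · subst h
        rw [hvv] at hfb
        omega
      · have h0 := hbl' b h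
        rw [← hvv] at h0
        omega
    have hsub : T.image f ⊆ Finset.univ.filter (fun i : Fin m => Y i 1 ≠ 0) := by
      intro a ha
      rw [Finset.mem_image] at ha
      obtain ⟨v, hv, hfv⟩ := ha
      obtain ⟨b, hb1, hbn, hfb, hbl⟩ := hfspec v hv
      have hv1 : 1 ≤ v := by rw [hTdef, Finset.mem_Icc] at hv; omega
      simp only [Finset.mem_filter, Finset.mem_univ, true_and]
      have h0 := hchain (f v) 1 b le_rfl hb1 (by omega)
      rw [hfv] at h0
      omega
    have hcard : (T.image f).card =
        (Finset.univ.filter (fun i : Fin m => Y i 1 ≠ 0)).card := by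
      rw [Finset.card_image_of_injOn hinj, hcardT, hpB]
    have heq : T.image f = Finset.univ.filter (fun i : Fin m => Y i 1 ≠ 0) :=
      Finset.eq_of_subset_of_card_le hsub (le_of_eq hcard.symm)
    have hmem : i ∈ T.image f := by rw [heq]; exact hiB
    rw [Finset.mem_image] at hmem
    obtain ⟨v, hvT, hfv⟩ := hmem
    obtain ⟨b, hb1, hbn, hfb, hbl⟩ := hfspec v hvT
    rw [hfv] at hfb hbl
    have hvge : n - pB + 1 ≤ v := by rw [hTdef, Finset.mem_Icc] at hvT; exact hvT.1
    have hjb : j < b := by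
      rcases Nat.lt_or_ge j b with h | h
      · exact h
      · exfalso
        rcases Nat.eq_or_lt_of_le h with h' | h'
        · rw [← h'] at hij
          omega
        · have := hbl j h'
          omega
    have hS1 : 0 < S 1 := by
      have h1 := hSeq i j (by omega) (by omega)
      rw [hij] at h1
      rw [h1]
      exact hchain i (j + 1) b (by omega) (by omega) (by omega)
    have := hmono 1 w hS1 (by omega) (by omega)
    omega
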